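/- The Euclidean distance in ℝ⁶ between the segment from the origin to (1,1,1,1,1,1) and the 5-dimensional simplex with vertices (1,0,1,1,0,0), (1,0,0,0,1,1), (0,1,1,0,1,1), (0,1,0,1,0,1), (0,1,0,1,1,0) equals 1/√202. -/

import Mathlib

@[simp] lemma vec6_five18 {α : Type*} (a b c d e f : α) : ![a,b,c,d,e,f] 5 = f := rfl

noncomputable section Aux18

def wvec18 : EuclideanSpace ℝ (Fin 6) :=
  (WithLp.equiv 2 (Fin 6 → ℝ)).symm ![-7, -9, 2, 6, 4, 4]

lemma norm_wvec18 : ‖wvec18‖ = Real.sqrt 202 := by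
  simp only [wvec18, EuclideanSpace.norm_eq, WithLp.equiv_symm_apply, PiLp.toLp_apply, Fin.sum_univ_six,
    Matrix.cons_val]
  norm_num

def vv18 : Fin 5 → EuclideanSpace ℝ (Fin 6) :=
  ![(WithLp.equiv 2 (Fin 6 → ℝ)).symm ![1, 0, 1, 1, 0, 0],
  (WithLp.equiv 2 (Fin 6 → ℝ)).symm ![1, 0, 0, 0, 1, 1],
  (WithLp.equiv 2 (Fin 6 → ℝ)).symm ![0, 1, 1, 0, 1, 1],
  (WithLp.equiv 2 (Fin 6 → ℝ)).symm ![0, 1, 0, 1, 0, 1],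
  (WithLp.equiv 2 (Fin 6 → ℝ)).symm ![0, 1, 0, 1, 1, 0]]

lemma inner_wvec18_vertex (i : Fin 5) : (inner ℝ wvec18 (vv18 i) : ℝ) = 1 := by
  fin_cases i <;>
    simp only [vv18, wvec18, PiLp.inner_apply, RCLike.inner_apply, starRingEnd_apply,
      star_trivial, Fin.sum_univ_six, WithLp.equiv_symm_apply, PiLp.toLp_apply, Matrix.cons_val_zero,
      Matrix.cons_val_one, Matrix.head_cons, Matrix.cons_val_two, Matrix.cons_val_three,
      Matrix.cons_val_four, Matrix.tail_cons, vec6_five18, Matrix.cons_val] <;> simp [Matrix.cons_val] <;> norm_num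

def lam18 : Fin 5 → ℝ := ![63/202, 39/202, 48/202, 26/202, 26/202]

def pstar18 : EuclideanSpace ℝ (Fin 6) :=
  (WithLp.equiv 2 (Fin 6 → ℝ)).symm ![109/202, 109/202, 109/202, 109/202, 109/202, 109/202]

def qstar18 : EuclideanSpace ℝ (Fin 6) :=
  (WithLp.equiv 2 (Fin 6 → ℝ)).symm ![102/202, 100/202, 111/202, 115/202, 113/202, 113/202]

end Aux18

/-- The infimum of Euclidean distances between points of two sets. -/
noncomputable def setDist {E : Type*} [PseudoMetricSpace E] (P Q : Set E) : ℝ :=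
  sInf (Set.image2 dist P Q)

theorem stmt_18 :
    setDist
        (segment ℝ ((WithLp.equiv 2 (Fin 6 → ℝ)).symm ![0, 0, 0, 0, 0, 0])
          ((WithLp.equiv 2 (Fin 6 → ℝ)).symm ![1, 1, 1, 1, 1, 1]))
        (convexHull ℝ {(WithLp.equiv 2 (Fin 6 → ℝ)).symm ![1, 0, 1, 1, 0, 0],
          (WithLp.equiv 2 (Fin 6 → ℝ)).symm ![1, 0, 0, 0, 1, 1],
          (WithLp.equiv 2 (Fin 6 → ℝ)).symm ![0, 1, 1, 0, 1, 1],
          (WithLp.equiv 2 (Fin 6 → ℝ)).symm ![0, 1, 0, 1, 0, 1],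
          (WithLp.equiv 2 (Fin 6 → ℝ)).symm ![0, 1, 0, 1, 1, 0]}) =
      1 / Real.sqrt 202 := by
  set z0 : EuclideanSpace ℝ (Fin 6) := (WithLp.equiv 2 (Fin 6 → ℝ)).symm ![0, 0, 0, 0, 0, 0]
    with hz0
  set z1 : EuclideanSpace ℝ (Fin 6) := (WithLp.equiv 2 (Fin 6 → ℝ)).symm ![1, 1, 1, 1, 1, 1]
    with hz1
  set S : Set (EuclideanSpace ℝ (Fin 6)) :=
    {(WithLp.equiv 2 (Fin 6 → ℝ)).symm ![1, 0, 1, 1, 0, 0],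
      (WithLp.equiv 2 (Fin 6 → ℝ)).symm ![1, 0, 0, 0, 1, 1],
      (WithLp.equiv 2 (Fin 6 → ℝ)).symm ![0, 1, 1, 0, 1, 1],
      (WithLp.equiv 2 (Fin 6 → ℝ)).symm ![0, 1, 0, 1, 0, 1],
      (WithLp.equiv 2 (Fin 6 → ℝ)).symm ![0, 1, 0, 1, 1, 0]} with hS
  have hsqrt : (0 : ℝ) < Real.sqrt 202 := Real.sqrt_pos.mpr (by norm_num)
  -- inner product with wvec18 is 0 on the segment
  have hseg : ∀ p ∈ segment ℝ z0 z1, (inner ℝ wvec18 p : ℝ) = 0 := by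
    rintro p ⟨a, b, ha, hb, hab, rfl⟩
    have h0 : (inner ℝ wvec18 z0 : ℝ) = 0 := by
      simp only [wvec18, hz0, PiLp.inner_apply, RCLike.inner_apply, starRingEnd_apply,
        star_trivial, Fin.sum_univ_six, WithLp.equiv_symm_apply, PiLp.toLp_apply, Matrix.cons_val]
      norm_num
    have h1 : (inner ℝ wvec18 z1 : ℝ) = 0 := by
      simp only [wvec18, hz1, PiLp.inner_apply, RCLike.inner_apply, starRingEnd_apply,
        star_trivial, Fin.sum_univ_six, WithLp.equiv_symm_apply, PiLp.toLp_apply, Matrix.cons_val]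
      norm_num
    rw [inner_add_right, real_inner_smul_right, real_inner_smul_right, h0, h1]
    ring
  -- inner product with wvec18 is 1 on the hull
  have hlin : IsLinearMap ℝ (fun x : EuclideanSpace ℝ (Fin 6) => (inner ℝ wvec18 x : ℝ)) :=
    ⟨fun x y => inner_add_right _ _ _, fun c x => real_inner_smul_right _ _ _⟩
  have hhull : ∀ q ∈ convexHull ℝ S, (inner ℝ wvec18 q : ℝ) = 1 := by
    intro q hq
    have hsub : S ⊆ {x : EuclideanSpace ℝ (Fin 6) | (inner ℝ wvec18 x : ℝ) = 1} := by
      intro x hx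
      simp only [hS, Set.mem_insert_iff, Set.mem_singleton_iff] at hx
      rcases hx with rfl | rfl | rfl | rfl | rfl
      · exact inner_wvec18_vertex 0
      · exact inner_wvec18_vertex 1
      · exact inner_wvec18_vertex 2
      · exact inner_wvec18_vertex 3
      · exact inner_wvec18_vertex 4
    exact convexHull_min hsub (convex_hyperplane hlin 1) hq
  -- lower bound for all pairs
  have hlb : ∀ p ∈ segment ℝ z0 z1, ∀ q ∈ convexHull ℝ S,
      1 / Real.sqrt 202 ≤ dist p q := by
    intro p hp q hq
    have h1 : (inner ℝ wvec18 (q - p) : ℝ) = 1 := by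
      rw [inner_sub_right, hseg p hp, hhull q hq]; ring
    have h2 : (1 : ℝ) ≤ ‖wvec18‖ * ‖q - p‖ := h1 ▸ real_inner_le_norm wvec18 (q - p)
    rw [norm_wvec18] at h2
    rw [dist_eq_norm', div_le_iff₀ hsqrt]
    linarith [mul_comm (Real.sqrt 202) ‖q - p‖]
  -- membership of the witnesses
  have hp : pstar18 ∈ segment ℝ z0 z1 := by
    refine ⟨93/202, 109/202, by norm_num, by norm_num, by norm_num, ?_⟩
    ext i
    fin_cases i <;>
      simp [pstar18, hz0, hz1, PiLp.add_apply, PiLp.smul_apply,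
        WithLp.equiv_symm_apply, PiLp.toLp_apply, smul_eq_mul] <;> norm_num
  have hq : qstar18 ∈ convexHull ℝ S := by
    have hmem : ∀ i ∈ Finset.univ, vv18 i ∈ convexHull ℝ S := by
      intro i _
      apply subset_convexHull
      fin_cases i <;> simp [vv18, hS]
    have hsum : ∑ i : Fin 5, lam18 i = 1 := by
      simp [lam18, Fin.sum_univ_five]; norm_num
    have := (convex_convexHull ℝ S).sum_mem
      (t := Finset.univ) (w := lam18) (z := vv18)
      (fun i _ => by fin_cases i <;> norm_num [lam18]) hsum hmem
    convert this using 1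
    ext j
    simp only [Fin.sum_univ_five, lam18, vv18, qstar18]
    fin_cases j <;>
      simp [PiLp.add_apply, PiLp.smul_apply, WithLp.equiv_symm_apply, PiLp.toLp_apply, smul_eq_mul] <;>
      norm_num
  -- distance between the witnesses
  have hdist : dist pstar18 qstar18 = 1 / Real.sqrt 202 := by
    rw [EuclideanSpace.dist_eq]
    have : ∑ i : Fin 6, dist (pstar18 i) (qstar18 i) ^ 2 = 1/202 := by
      simp only [Fin.sum_univ_six, pstar18, qstar18, WithLp.equiv_symm_apply, PiLp.toLp_apply,
        Real.dist_eq, Matrix.cons_val]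
      norm_num [abs_of_nonneg, abs_of_nonpos]
    rw [this, one_div, Real.sqrt_inv, one_div]
  -- conclude
  rw [setDist]
  apply le_antisymm
  · rw [← hdist]
    exact csInf_le ⟨0, by rintro y ⟨p, hp', q, hq', rfl⟩; exact dist_nonneg⟩
      (Set.mem_image2_of_mem hp hq)
  · apply le_csInf ⟨_, Set.mem_image2_of_mem hp hq⟩
    rintro y ⟨p, hp', q, hq', rfl⟩
    exact hlb p hp' q hq'
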